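/- Let θ : G → ℂ be a function with |θ(g)| = 1 for all g, and let (ψ_i)_{i ∈ ι} be an orthonormal family of vectors satisfying π(g) ψ_i = θ(g) • ψ_i for every g ∈ G and every i. Let (E_p)_{p ∈ κ} be a family of n×n complex matrices (error operators) such that for all p, q there exists a scalar c_{pq} ∈ ℂ with Π_G(E_p* E_q) = c_{pq} • 1. Then the Knill–Laflamme conditions hold: for all p, q and all indices i, j, ⟨ψ_i, E_p* E_q ψ_j⟩ = c_{pq} if i = j and 0 if i ≠ j; hence the span of the ψ_i is a quantum error-correcting code for the errors E_p. -/

import Mathlib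

/-- The symmetrization map `Π_G` associated with a unitary representation
`π : G →* U(n)`: `Π_G(S) = (1/|G|) ∑ g, π(g) S π(g)*`. -/
noncomputable def symG {G : Type*} [Group G] [Fintype G] {n : ℕ}
    (π : G →* Matrix.unitaryGroup (Fin n) ℂ)
    (S : Matrix (Fin n) (Fin n) ℂ) : Matrix (Fin n) (Fin n) ℂ :=
  (Fintype.card G : ℂ)⁻¹ • ∑ g : G,
    (π g : Matrix (Fin n) (Fin n) ℂ) * S * star (π g : Matrix (Fin n) (Fin n) ℂ)

lemma toEuclideanLin_mul_apply {n : ℕ} (A B : Matrix (Fin n) (Fin n) ℂ)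
    (v : EuclideanSpace ℂ (Fin n)) :
    Matrix.toEuclideanLin (A * B) v = Matrix.toEuclideanLin A (Matrix.toEuclideanLin B v) := by
  simp [Matrix.toEuclideanLin_apply, Matrix.mulVec_mulVec]

/-- Knill–Laflamme conditions from symmetrization: if an orthonormal family `(ψ i)`
transforms under `G` with a common unimodular phase function and
`Π_G(E_p* E_q) = c_{pq} • 1` for all `p, q`, then
`⟨ψ i, E_p* E_q ψ j⟩ = c_{pq} δ_{ij}`; hence the span of the `ψ i` is a quantum
error-correcting code for the errors `E_p`. -/
theorem knill_laflamme_of_symG_scalar {G : Type*} [Group G] [Fintype G] {n : ℕ}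
    (hn : 0 < n) (π : G →* Matrix.unitaryGroup (Fin n) ℂ)
    {ι κ : Type*} [DecidableEq ι] (θ : G → ℂ) (hθ : ∀ g, ‖θ g‖ = 1)
    (ψ : ι → EuclideanSpace ℂ (Fin n)) (hortho : Orthonormal ℂ ψ)
    (heig : ∀ (g : G) (i : ι),
      Matrix.toEuclideanLin (π g : Matrix (Fin n) (Fin n) ℂ) (ψ i) = θ g • ψ i)
    (E : κ → Matrix (Fin n) (Fin n) ℂ) (c : κ → κ → ℂ)
    (hE : ∀ p q : κ, symG π (star (E p) * E q) = c p q • (1 : Matrix (Fin n) (Fin n) ℂ)) :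
    ∀ (p q : κ) (i j : ι),
      (inner ℂ (ψ i) (Matrix.toEuclideanLin (star (E p) * E q) (ψ j)) : ℂ)
        = if i = j then c p q else 0 := by
  intro p q i j
  set M := star (E p) * E q with hM
  -- θ g is nonzero
  have hθ0 : ∀ g, θ g ≠ 0 := fun g h => by simpa [h] using hθ g
  -- action of star (π g)
  have hstar : ∀ (g : G) (i : ι),
      Matrix.toEuclideanLin (star (π g : Matrix (Fin n) (Fin n) ℂ)) (ψ i)
        = (θ g)⁻¹ • ψ i := by
    intro g i
    have hu : star (π g : Matrix (Fin n) (Fin n) ℂ) * (π g : Matrix (Fin n) (Fin n) ℂ) = 1 :=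
      (π g).2.1
    have h1 : Matrix.toEuclideanLin (star (π g : Matrix (Fin n) (Fin n) ℂ))
        (Matrix.toEuclideanLin (π g : Matrix (Fin n) (Fin n) ℂ) (ψ i)) = ψ i := by
      rw [← toEuclideanLin_mul_apply, hu]
      simp [Matrix.toEuclideanLin_apply]
    rw [heig g i, map_smul] at h1
    have := congrArg (fun v => (θ g)⁻¹ • v) h1
    simpa [smul_smul, inv_mul_cancel₀ (hθ0 g)] using this
  -- each conjugated term has the same matrix element
  have hterm : ∀ g : G,
      (inner ℂ (ψ i) (Matrix.toEuclideanLin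
        ((π g : Matrix (Fin n) (Fin n) ℂ) * M * star (π g : Matrix (Fin n) (Fin n) ℂ)) (ψ j)) : ℂ)
      = inner ℂ (ψ i) (Matrix.toEuclideanLin M (ψ j)) := by
    intro g
    have hadj : ∀ (x y : EuclideanSpace ℂ (Fin n)),
        (inner ℂ x (Matrix.toEuclideanLin (π g : Matrix (Fin n) (Fin n) ℂ) y) : ℂ)
          = inner ℂ (Matrix.toEuclideanLin (star (π g : Matrix (Fin n) (Fin n) ℂ)) x) y := by
      intro x y
      have h2 := Matrix.toEuclideanLin_conjTranspose_eq_adjoint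
        (π g : Matrix (Fin n) (Fin n) ℂ)
      rw [show star (π g : Matrix (Fin n) (Fin n) ℂ)
          = Matrix.conjTranspose (π g : Matrix (Fin n) (Fin n) ℂ) from rfl,
        h2, LinearMap.adjoint_inner_left]
    have hconj : (starRingEnd ℂ) ((θ g)⁻¹) * (θ g)⁻¹ = 1 := by
      rw [map_inv₀, ← mul_inv]
      rw [show (starRingEnd ℂ) (θ g) * θ g = ((‖θ g‖ : ℝ) : ℂ) ^ 2 by
        rw [mul_comm, Complex.mul_conj, Complex.normSq_eq_norm_sq]; push_cast; ring]
      rw [hθ g]; norm_num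
    rw [mul_assoc, toEuclideanLin_mul_apply, toEuclideanLin_mul_apply, hadj,
      hstar g i, hstar g j, map_smul, inner_smul_left, inner_smul_right,
      ← mul_assoc, hconj, one_mul]
  -- now use hE
  have hcard : (Fintype.card G : ℂ) ≠ 0 := by
    exact_mod_cast Nat.cast_ne_zero.mpr Fintype.card_ne_zero
  have hsym : (inner ℂ (ψ i) (Matrix.toEuclideanLin (symG π M) (ψ j)) : ℂ)
      = inner ℂ (ψ i) (Matrix.toEuclideanLin M (ψ j)) := by
    unfold symG
    rw [map_smul, map_sum]
    simp only [LinearMap.smul_apply, LinearMap.sum_apply, inner_smul_right, inner_sum]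
    rw [Finset.sum_congr rfl (fun g _ => hterm g)]
    rw [Finset.sum_const, Finset.card_univ, nsmul_eq_mul]
    field_simp
  rw [← hsym, hE p q, map_smul]
  simp only [LinearMap.smul_apply, inner_smul_right]
  have h1 : Matrix.toEuclideanLin (1 : Matrix (Fin n) (Fin n) ℂ) (ψ j) = ψ j := by
    simp [Matrix.toEuclideanLin_apply]
  rw [h1, orthonormal_iff_ite.mp hortho i j]
  split <;> simp
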